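/- Let n be a positive integer, p a prime, and let i be the smallest index with 0 ≤ i ≤ n−2 such that p | (n−i) (assuming p | n!). Then modulo p, the polynomial f_n(x) = ∑_{k=0}^{n} (n!/k!)·x^k factors as x^{n−i} · h(x), where h(x) = ∑_{j=0}^{i} (n!/(n−j)!)·x^{i−j} mod p, and moreover h is separable modulo p with h(0) ≢ 0 mod p. -/

import Mathlib

open Polynomial NumberField

/-- The monic integer polynomial `n!` times the `n`-th Taylor polynomial of `exp`:
`f_n(x) = ∑_(k=0)^(n) (n!/k!) x^k`. -/
noncomputable def fInt (n : ℕ) : Polynomial ℤ :=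
  ∑ k ∈ Finset.range (n + 1), C ((n.factorial / k.factorial : ℕ) : ℤ) * X ^ k

/-- The index `[ℤ_K : ℤ[θ]]` of the order `ℤ[θ]` in the ring of integers of `K`. -/
noncomputable def subIdx {K : Type*} [Field K] [NumberField K] (θ : 𝓞 K) : ℕ :=
  (Subalgebra.toSubmodule (Algebra.adjoin ℤ ({θ} : Set (𝓞 K)))).toAddSubgroup.index

/-- The cofactor `h(x) = ∑_(j=0)^(i) (n!/(n-j)!) x^(i-j)`. -/
noncomputable def hPoly (n i : ℕ) : Polynomial ℤ :=
  ∑ j ∈ Finset.range (i + 1), C ((n.factorial / (n - j).factorial : ℕ) : ℤ) * X ^ (i - j)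

private lemma fac_div_mul {k m n : ℕ} (hkm : k ≤ m) (hmn : m ≤ n) :
    n.factorial / m.factorial * (m.factorial / k.factorial) = n.factorial / k.factorial := by
  obtain ⟨a, ha⟩ := Nat.factorial_dvd_factorial hmn
  obtain ⟨b, hb⟩ := Nat.factorial_dvd_factorial hkm
  have h1 : n.factorial / m.factorial = a := by
    rw [ha, Nat.mul_div_cancel_left _ m.factorial_pos]
  have h2 : m.factorial / k.factorial = b := by
    rw [hb, Nat.mul_div_cancel_left _ k.factorial_pos]
  have h3 : n.factorial / k.factorial = b * a := by
    rw [ha, hb, mul_assoc, Nat.mul_div_cancel_left _ k.factorial_pos]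
  rw [h1, h2, h3, mul_comm]

private lemma fac_succ_div {m : ℕ} : (m + 1).factorial / m.factorial = m + 1 := by
  rw [Nat.factorial_succ, Nat.mul_div_cancel _ m.factorial_pos]

private lemma fac_div_eq_prod {n : ℕ} : ∀ {i : ℕ}, i ≤ n →
    n.factorial / (n - i).factorial = ∏ j ∈ Finset.range i, (n - j) := by
  intro i
  induction i with
  | zero => simp [Nat.div_self n.factorial_pos]
  | succ i ih =>
    intro h
    have hin : i ≤ n := by omega
    have hm : n - i = (n - (i + 1)) + 1 := by omega
    have h2 : (n - i).factorial / (n - (i + 1)).factorial = n - i := by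
      rw [hm, fac_succ_div]
    have h1 := fac_div_mul (k := n - (i + 1)) (m := n - i) (n := n) (by omega) (by omega)
    rw [Finset.prod_range_succ, ← ih hin, ← h1, h2]

private lemma fInt_derivative (n : ℕ) : derivative (fInt n) = fInt n - X ^ n := by
  unfold fInt
  rw [derivative_sum]
  have e1 : ∀ k ∈ Finset.range (n + 1),
      derivative (C ((n.factorial / k.factorial : ℕ) : ℤ) * X ^ k)
        = C ((n.factorial / k.factorial : ℕ) : ℤ) * (C (k : ℤ) * X ^ (k - 1)) := by
    intro k _
    rw [derivative_C_mul, derivative_X_pow]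
  rw [Finset.sum_congr rfl e1, Finset.sum_range_succ' _ n]
  have e2 : ∀ k ∈ Finset.range n,
      C ((n.factorial / (k + 1).factorial : ℕ) : ℤ) * (C ((k + 1 : ℕ) : ℤ) * X ^ (k + 1 - 1))
        = C ((n.factorial / k.factorial : ℕ) : ℤ) * X ^ k := by
    intro k hk
    have hk' : k + 1 ≤ n := Finset.mem_range.mp hk
    have hd : n.factorial / (k + 1).factorial * ((k + 1).factorial / k.factorial)
        = n.factorial / k.factorial := fac_div_mul (Nat.le_succ k) hk'
    rw [fac_succ_div] at hd
    rw [← mul_assoc, ← C_mul, ← Int.natCast_mul, hd]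
    simp
  rw [Finset.sum_congr rfl e2]
  have e3 : (∑ k ∈ Finset.range (n + 1), C ((n.factorial / k.factorial : ℕ) : ℤ) * X ^ k)
        - X ^ n
      = ∑ k ∈ Finset.range n, C ((n.factorial / k.factorial : ℕ) : ℤ) * X ^ k := by
    rw [Finset.sum_range_succ, Nat.div_self n.factorial_pos]
    simp
  rw [e3]
  simp

/-- Mod `p`, `f_n` factors as `x^(n-i) * h(x)` with `h` separable and `h(0) ≠ 0`. -/
theorem fInt_factorization_mod_p (n p i : ℕ) (hn : 0 < n) (hp : p.Prime)
    (hpn : p ∣ n.factorial) (hi : i ≤ n - 2) (hdvd : p ∣ (n - i))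
    (hmin : ∀ j < i, ¬ p ∣ (n - j)) :
    (fInt n).map (Int.castRingHom (ZMod p)) =
        X ^ (n - i) * (hPoly n i).map (Int.castRingHom (ZMod p)) ∧
      ((hPoly n i).map (Int.castRingHom (ZMod p))).Separable ∧
      ((hPoly n i).map (Int.castRingHom (ZMod p))).eval 0 ≠ 0 := by
  haveI : Fact p.Prime := ⟨hp⟩
  set φ := Int.castRingHom (ZMod p) with hφ
  have hφn : ∀ c : ℕ, φ ((c : ℕ) : ℤ) = (c : ZMod p) := by
    intro c; simp [hφ]
  have hn2 : 2 ≤ n := by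
    by_contra h
    have hi0 : i = 0 := by omega
    subst hi0
    have h1 : n - 0 = 1 := by omega
    rw [h1] at hdvd
    exact hp.one_lt.ne' (Nat.dvd_one.mp hdvd)
  have hin : i ≤ n := by omega
  have hni2 : 2 ≤ n - i := by omega
  -- coefficients below n - i are divisible by p
  have hdvdc : ∀ k < n - i, p ∣ n.factorial / k.factorial := by
    intro k hk
    obtain ⟨m, hm⟩ : ∃ m, n - i = m + 1 := ⟨n - i - 1, by omega⟩
    have h1 : k ≤ m := by omega
    have e : (m + 1).factorial / k.factorial = (m + 1) * (m.factorial / k.factorial) := by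
      rw [← fac_div_mul h1 (Nat.le_succ m), fac_succ_div]
    have h2 : (n - i) ∣ (n - i).factorial / k.factorial := by
      rw [hm, e]; exact Dvd.intro _ rfl
    have h3 := fac_div_mul (k := k) (m := n - i) (n := n) (by omega) (by omega)
    rw [← h3]
    exact (hdvd.trans h2).mul_left _
  -- `h(0)` coefficient is not divisible by `p`
  have hnd : ¬ p ∣ n.factorial / (n - i).factorial := by
    rw [fac_div_eq_prod hin]
    intro h
    obtain ⟨j, hj, hjd⟩ := hp.prime.exists_mem_finset_dvd h
    exact hmin j (Finset.mem_range.mp hj) hjd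
  -- evaluation at zero
  have heval : ((hPoly n i).map φ).eval 0 ≠ 0 := by
    unfold hPoly
    rw [Polynomial.map_sum, Polynomial.eval_finset_sum]
    have e : ∀ j ∈ Finset.range (i + 1), j ≠ i →
        ((C ((n.factorial / (n - j).factorial : ℕ) : ℤ) * X ^ (i - j)).map φ).eval 0 = 0 := by
      intro j hj hji
      have hij : 0 < i - j := by
        have := Finset.mem_range.mp hj; omega
      rw [Polynomial.map_mul, Polynomial.map_C, Polynomial.map_pow, Polynomial.map_X,
        eval_mul, eval_pow, eval_X, zero_pow (by omega), mul_zero]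
    rw [Finset.sum_eq_single i e (by simp)]
    rw [Polynomial.map_mul, Polynomial.map_C, Polynomial.map_pow, Polynomial.map_X, hφn,
      Nat.sub_self, pow_zero, mul_one, eval_C]
    intro h
    exact hnd ((ZMod.natCast_eq_zero_iff _ _).mp h)
  -- main factorization
  have key : (fInt n).map φ = X ^ (n - i) * (hPoly n i).map φ := by
    unfold fInt hPoly
    rw [Polynomial.map_sum, Polynomial.map_sum]
    have hsplit : n + 1 = (n - i) + (i + 1) := by omega
    rw [hsplit, Finset.sum_range_add]
    have h0 : ∑ k ∈ Finset.range (n - i),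
        ((C ((n.factorial / k.factorial : ℕ) : ℤ)) * X ^ k).map φ = 0 := by
      apply Finset.sum_eq_zero
      intro k hk
      rw [Polynomial.map_mul, Polynomial.map_C, Polynomial.map_pow, Polynomial.map_X, hφn,
        (ZMod.natCast_eq_zero_iff _ _).mpr (hdvdc k (Finset.mem_range.mp hk)),
        C_0, zero_mul]
    rw [h0, zero_add, Finset.mul_sum]
    conv_rhs => rw [← Finset.sum_range_reflect]
    apply Finset.sum_congr rfl
    intro k hk
    have hk' : k ≤ i := by
      have := Finset.mem_range.mp hk; omega
    have e2 : n - (i + 1 - 1 - k) = n - i + k := by omega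
    have e3 : i - (i + 1 - 1 - k) = k := by omega
    rw [e2, e3, Polynomial.map_mul, Polynomial.map_C, Polynomial.map_pow, Polynomial.map_X,
      Polynomial.map_mul, Polynomial.map_C, Polynomial.map_pow, Polynomial.map_X, pow_add]
    ring
  -- separability
  have hsep : ((hPoly n i).map φ).Separable := by
    set H := (hPoly n i).map φ with hH
    have hderF : derivative ((fInt n).map φ) = (fInt n).map φ - X ^ n := by
      rw [Polynomial.derivative_map, fInt_derivative, Polynomial.map_sub,
        Polynomial.map_pow, Polynomial.map_X]
    have hz : ((n - i : ℕ) : ZMod p) = 0 := (ZMod.natCast_eq_zero_iff _ _).mpr hdvd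
    have e1 : derivative ((fInt n).map φ) = X ^ (n - i) * derivative H := by
      rw [key, derivative_mul, derivative_X_pow, hz]
      simp
    have e2 : X ^ (n - i) * derivative H = X ^ (n - i) * (H - X ^ i) := by
      rw [← e1, hderF, key, mul_sub, ← pow_add]
      have hni : n - i + i = n := by omega
      rw [hni]
    have hXne : (X : Polynomial (ZMod p)) ^ (n - i) ≠ 0 := pow_ne_zero _ X_ne_zero
    have hHd : derivative H = H - X ^ i := mul_left_cancel₀ hXne e2
    have hXH : IsCoprime (X : Polynomial (ZMod p)) H :=
      (Polynomial.irreducible_X.coprime_iff_not_dvd).mpr (by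
        rw [Polynomial.X_dvd_iff, Polynomial.coeff_zero_eq_eval_zero]; exact heval)
    have h1 : IsCoprime H ((X : Polynomial (ZMod p)) ^ i) := (hXH.pow_left).symm
    have h3 := h1.add_mul_left_right (-1)
    have e4 : (X : Polynomial (ZMod p)) ^ i + H * (-1) = -(derivative H) := by
      rw [hHd]; ring
    rw [e4] at h3
    exact (IsCoprime.neg_right_iff _ _).mp h3
  exact ⟨key, hsep, heval⟩
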